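/- Let a₁ ≥ a₂ ≥ ... ≥ a_m be a non-increasing sequence of positive natural numbers summing to n, with a₁ ≤ s. Then ∏_{i=1}^{m} (a_i + 1) is minimized (over all such sequences summing to n with all parts at most s) by the sequence consisting of ⌊n/s⌋ copies of s followed by one part equal to n mod s (if n mod s > 0). -/

import Mathlib

private def fmin (s n : ℕ) : ℕ := (s + 1) ^ (n / s) * (n % s + 1)

private lemma fmin_step (s a m : ℕ) (hs : 1 ≤ s) (ha : a ≤ s) :
    fmin s (m + a) ≤ (a + 1) * fmin s m := by
  unfold fmin
  obtain ⟨q, r, hr, rfl⟩ : ∃ q r, r < s ∧ m = s * q + r :=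
    ⟨m / s, m % s, Nat.mod_lt _ hs, (Nat.div_add_mod m s).symm⟩
  have hdiv : (s * q + r) / s = q := by
    rw [Nat.mul_add_div hs, Nat.div_eq_of_lt hr]; ring
  have hmod : (s * q + r) % s = r := by
    rw [Nat.mul_add_mod, Nat.mod_eq_of_lt hr]
  rw [hdiv, hmod]
  by_cases h : r + a < s
  · have hdiv2 : (s * q + r + a) / s = q := by
      rw [add_assoc, Nat.mul_add_div hs, Nat.div_eq_of_lt h]; ring
    have hmod2 : (s * q + r + a) % s = r + a := by
      rw [add_assoc, Nat.mul_add_mod, Nat.mod_eq_of_lt h]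
    rw [hdiv2, hmod2]
    calc (s + 1) ^ q * (r + a + 1) ≤ (s + 1) ^ q * ((a + 1) * (r + 1)) := by
          apply Nat.mul_le_mul_left; nlinarith
      _ = (a + 1) * ((s + 1) ^ q * (r + 1)) := by ring
  · push_neg at h
    obtain ⟨t, ht⟩ : ∃ t, r + a = s + t := ⟨r + a - s, by omega⟩
    have ht2 : t ≤ r := by omega
    have hdiv2 : (s * q + r + a) / s = q + 1 := by
      rw [add_assoc, ht, Nat.mul_add_div hs]
      rw [show s + t = s * 1 + t by ring, Nat.mul_add_div hs,
        Nat.div_eq_of_lt (by omega)]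
    have hmod2 : (s * q + r + a) % s = t := by
      rw [add_assoc, ht, Nat.mul_add_mod, show s + t = s * 1 + t by ring,
        Nat.mul_add_mod, Nat.mod_eq_of_lt (by omega)]
    rw [hdiv2, hmod2, pow_succ]
    have key : (s + 1) * (t + 1) ≤ (a + 1) * (r + 1) := by nlinarith
    calc (s + 1) ^ q * (s + 1) * (t + 1) = (s + 1) ^ q * ((s + 1) * (t + 1)) := by ring
      _ ≤ (s + 1) ^ q * ((a + 1) * (r + 1)) := Nat.mul_le_mul_left _ key
      _ = (a + 1) * ((s + 1) ^ q * (r + 1)) := by ring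

private lemma fmin_le_prod (s : ℕ) (hs : 1 ≤ s) :
    ∀ l : List ℕ, (∀ a ∈ l, 0 < a ∧ a ≤ s) → fmin s l.sum ≤ (l.map (· + 1)).prod := by
  intro l
  induction l with
  | nil => intro _; simp [fmin]
  | cons x xs ih =>
    intro h
    have hx := h x (by simp)
    have hxs := fun a ha => h a (List.mem_cons_of_mem _ ha)
    simp only [List.sum_cons, List.map_cons, List.prod_cons]
    calc fmin s (x + xs.sum) = fmin s (xs.sum + x) := by rw [add_comm]
      _ ≤ (x + 1) * fmin s xs.sum := fmin_step s x xs.sum hs hx.2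
      _ ≤ (x + 1) * (xs.map (· + 1)).prod := Nat.mul_le_mul_left _ (ih hxs)

theorem stmt_16 (s n : ℕ) (hs : 1 ≤ s) (hn : 1 ≤ n) :
    -- the canonical sequence: ⌊n/s⌋ copies of s followed by n mod s (if positive)
    ((List.replicate (n / s) s ++ if n % s = 0 then [] else [n % s]).Pairwise (· ≥ ·) ∧
      (∀ a ∈ List.replicate (n / s) s ++ (if n % s = 0 then [] else [n % s]),
        0 < a ∧ a ≤ s) ∧
      (List.replicate (n / s) s ++ (if n % s = 0 then [] else [n % s])).sum = n) ∧
    -- it minimizes the product of incremented entries over all such sequences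
    ∀ l : List ℕ, l.Pairwise (· ≥ ·) → (∀ a ∈ l, 0 < a ∧ a ≤ s) → l.sum = n →
      ((List.replicate (n / s) s ++
          (if n % s = 0 then [] else [n % s])).map (· + 1)).prod ≤
        (l.map (· + 1)).prod := by
  have hmodlt : n % s < s := Nat.mod_lt _ hs
  have hdm := Nat.div_add_mod n s
  have hprod : ((List.replicate (n / s) s ++
      (if n % s = 0 then [] else [n % s])).map (· + 1)).prod = fmin s n := by
    by_cases h : n % s = 0 <;>
      simp [h, fmin, List.prod_replicate, mul_comm]
  refine ⟨⟨?_, ?_, ?_⟩, ?_⟩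
  · by_cases h : n % s = 0 <;> simp [h, List.pairwise_append,
      List.pairwise_replicate, List.mem_replicate]
    · intros; omega
  · intro a ha
    rw [List.mem_append] at ha
    rcases ha with ha | ha
    · rw [List.mem_replicate] at ha
      omega
    · by_cases h : n % s = 0 <;> simp [h] at ha
      omega
  · by_cases h : n % s = 0 <;>
      simp [h, List.sum_append, List.sum_replicate, smul_eq_mul] <;>
      rw [mul_comm] <;> omega
  · intro l _ hl2 hl3
    rw [hprod, ← hl3]
    exact fmin_le_prod s hs l hl2
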